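/- Let C be a polygonal curve with vertices p_0, …, p_m and L(C) > 0. Then every pair of consecutive vertices of the arclength respacing f(C) satisfies the lower bound ‖f(p_k) − f(p_{k−1})‖ ≥ L(C)/m − (L(C) − L(f(C))) for k = 1, …, m. -/

import Mathlib

open Finset Filter

noncomputable section

/-- The length of the polygonal curve with vertices `p 0, …, p m`
(also the arclength distance from `p 0` to `p m` along the curve). -/
def polyLength {dim : ℕ} (p : ℕ → EuclideanSpace ℝ (Fin dim)) (m : ℕ) : ℝ :=
  ∑ i ∈ Finset.range m, ‖p (i + 1) - p i‖

/-- `P` is the arclength-parameterized linear interpolation of the polygonal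
curve with vertices `p 0, …, p m`:
`P ((1-t)·d_{k-1} + t·d_k) = (1-t)·p_{k-1} + t·p_k` for `t ∈ [0,1]`, `k = 1, …, m`,
where `d_k = polyLength p k` is the arclength up to vertex `k`. -/
def IsArcParam {dim : ℕ} (p : ℕ → EuclideanSpace ℝ (Fin dim)) (m : ℕ)
    (P : ℝ → EuclideanSpace ℝ (Fin dim)) : Prop :=
  ∀ k : ℕ, 1 ≤ k → k ≤ m → ∀ t : ℝ, 0 ≤ t → t ≤ 1 →
    P ((1 - t) * polyLength p (k - 1) + t * polyLength p k)
      = (1 - t) • p (k - 1) + t • p k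

/-- The polygonal curve with vertices `p 0, …, p m` is equilateral:
all consecutive interpoint distances agree. -/
def IsEquilateral {dim : ℕ} (p : ℕ → EuclideanSpace ℝ (Fin dim)) (m : ℕ) : Prop :=
  ∀ k l : ℕ, 1 ≤ k → k ≤ m → 1 ≤ l → l ≤ m →
    ‖p k - p (k - 1)‖ = ‖p l - p (l - 1)‖

/-- `q 0, …, q m` are the vertices of the arclength respacing `f(C)` of the
polygonal curve `C` with vertices `p 0, …, p m`:
`q k = P (k·L(C)/m)` where `P` is the arclength parameterization of `C`;
by convention `f(C) := C` when `L(C) = 0`. -/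
def Respaces {dim : ℕ} (m : ℕ) (p q : ℕ → EuclideanSpace ℝ (Fin dim)) : Prop :=
  (polyLength p m = 0 ∧ ∀ k ≤ m, q k = p k) ∨
  (0 < polyLength p m ∧ ∃ P : ℝ → EuclideanSpace ℝ (Fin dim), IsArcParam p m P ∧
    ∀ k ≤ m, q k = P ((k : ℝ) * polyLength p m / m))

lemma polyLength_mono {dim : ℕ} (p : ℕ → EuclideanSpace ℝ (Fin dim)) {j k : ℕ} (h : j ≤ k) :
    polyLength p j ≤ polyLength p k :=
  Finset.sum_le_sum_of_subset_of_nonneg (Finset.range_subset_range.2 h)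
    (fun _ _ _ => norm_nonneg _)

lemma polyLength_nonneg {dim : ℕ} (p : ℕ → EuclideanSpace ℝ (Fin dim)) (k : ℕ) :
    0 ≤ polyLength p k :=
  Finset.sum_nonneg fun _ _ => norm_nonneg _

/-- Within one segment, `P` is 1-Lipschitz. -/
lemma seg_lip {dim m : ℕ} {p : ℕ → EuclideanSpace ℝ (Fin dim)}
    {P : ℝ → EuclideanSpace ℝ (Fin dim)} (hP : IsArcParam p m P)
    {k : ℕ} (hk1 : 1 ≤ k) (hkm : k ≤ m) {a b : ℝ}
    (ha : polyLength p (k - 1) ≤ a) (hab : a ≤ b) (hb : b ≤ polyLength p k) :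
    ‖P b - P a‖ ≤ b - a := by
  set d0 := polyLength p (k - 1) with hd0
  set d1 := polyLength p k with hd1
  have hkk : k - 1 + 1 = k := by omega
  have hd : d1 = d0 + ‖p k - p (k - 1)‖ := by
    rw [hd1, hd0, ← hkk, polyLength, polyLength, Finset.sum_range_succ, hkk]
  set c := ‖p k - p (k - 1)‖ with hc
  rcases eq_or_lt_of_le (norm_nonneg (p k - p (k - 1))) with hc0 | hc0
  · have hcz : c = 0 := by rw [hc, ← hc0]
    have hab' : a = b := le_antisymm hab (by linarith)
    simp [hab']
  · rw [← hc] at hc0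
    set ta := (a - d0) / c with hta
    set tb := (b - d0) / c with htb
    have hca : a = (1 - ta) * d0 + ta * d1 := by
      rw [hta, hd]; field_simp; ring
    have hcb : b = (1 - tb) * d0 + tb * d1 := by
      rw [htb, hd]; field_simp; ring
    have hta0 : 0 ≤ ta := div_nonneg (by linarith) hc0.le
    have htb1 : tb ≤ 1 := by
      rw [htb, div_le_one hc0]; linarith [hd]
    have htab : ta ≤ tb := by
      rw [hta, htb]; gcongr
    have hPa : P a = (1 - ta) • p (k - 1) + ta • p k := by
      rw [hca]; exact hP k hk1 hkm ta hta0 (le_trans htab htb1)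
    have hPb : P b = (1 - tb) • p (k - 1) + tb • p k := by
      rw [hcb]; exact hP k hk1 hkm tb (le_trans hta0 htab) htb1
    have hdiff : P b - P a = (tb - ta) • (p k - p (k - 1)) := by
      rw [hPa, hPb]; module
    rw [hdiff, norm_smul, Real.norm_eq_abs, abs_of_nonneg (by linarith), ← hc]
    have : b - a = (tb - ta) * c := by
      rw [hca, hcb, hd]; ring
    linarith [this]

/-- `P` is 1-Lipschitz on `[0, polyLength p n]` for `n ≤ m`. -/
lemma param_lip {dim m : ℕ} {p : ℕ → EuclideanSpace ℝ (Fin dim)}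
    {P : ℝ → EuclideanSpace ℝ (Fin dim)} (hP : IsArcParam p m P) :
    ∀ n ≤ m, ∀ a b : ℝ, 0 ≤ a → a ≤ b → b ≤ polyLength p n → ‖P b - P a‖ ≤ b - a := by
  intro n
  induction n with
  | zero =>
    intro _ a b ha hab hb
    have h0 : polyLength p 0 = 0 := by simp [polyLength]
    rw [h0] at hb
    have : a = b := le_antisymm hab (by linarith)
    simp [this]
  | succ n ih =>
    intro hn a b ha hab hb
    have hn' : n ≤ m := by omega
    by_cases hbn : b ≤ polyLength p n
    · exact ih hn' a b ha hab hbn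
    · push_neg at hbn
      have hsuc : (n + 1) - 1 = n := by omega
      by_cases han : polyLength p n ≤ a
      · have := seg_lip hP (k := n + 1) (by omega) hn (by rw [hsuc]; exact han) hab hb
        exact this
      · push_neg at han
        have h1 : ‖P b - P (polyLength p n)‖ ≤ b - polyLength p n :=
          seg_lip hP (k := n + 1) (by omega) hn (by rw [hsuc]) hbn.le hb
        have h2 : ‖P (polyLength p n) - P a‖ ≤ polyLength p n - a :=
          ih hn' a (polyLength p n) ha han.le le_rfl
        calc ‖P b - P a‖ = ‖(P b - P (polyLength p n)) + (P (polyLength p n) - P a)‖ := by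
              congr 1; abel
          _ ≤ ‖P b - P (polyLength p n)‖ + ‖P (polyLength p n) - P a‖ := norm_add_le _ _
          _ ≤ (b - polyLength p n) + (polyLength p n - a) := by linarith
          _ = b - a := by ring

/-- Lower bound on distances between consecutive vertices of the arclength
respacing: `‖f(p k) - f(p (k-1))‖ ≥ L(C)/m - (L(C) - L(f(C)))`. -/
theorem stmt12 {dim m : ℕ} (hm : 1 ≤ m) (p : ℕ → EuclideanSpace ℝ (Fin dim))
    (hL : 0 < polyLength p m)
    (P : ℝ → EuclideanSpace ℝ (Fin dim)) (hP : IsArcParam p m P)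
    (q : ℕ → EuclideanSpace ℝ (Fin dim))
    (hq : ∀ k ≤ m, q k = P ((k : ℝ) * polyLength p m / m)) :
    ∀ k : ℕ, 1 ≤ k → k ≤ m →
      polyLength p m / m - (polyLength p m - polyLength q m)
        ≤ ‖q k - q (k - 1)‖ := by
  intro k hk1 hkm
  set L := polyLength p m with hLdef
  have hm0 : (0 : ℝ) < m := by exact_mod_cast hm
  -- each step of q has length at most L/m
  have hstep : ∀ i < m, ‖q (i + 1) - q i‖ ≤ L / m := by
    intro i hi
    rw [hq (i + 1) (by omega), hq i (by omega)]
    have ha : (0 : ℝ) ≤ (i : ℝ) * L / m :=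
      div_nonneg (mul_nonneg (Nat.cast_nonneg i) hL.le) hm0.le
    have hab : (i : ℝ) * L / m ≤ ((i + 1 : ℕ) : ℝ) * L / m := by
      push_cast; gcongr; linarith
    have hb : ((i + 1 : ℕ) : ℝ) * L / m ≤ L := by
      rw [div_le_iff₀ hm0]
      have : ((i + 1 : ℕ) : ℝ) ≤ (m : ℝ) := by exact_mod_cast hi
      nlinarith
    have := param_lip hP m le_rfl _ _ ha hab hb
    calc ‖P (((i + 1 : ℕ) : ℝ) * L / m) - P ((i : ℝ) * L / m)‖
        ≤ ((i + 1 : ℕ) : ℝ) * L / m - (i : ℝ) * L / m := this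
      _ = L / m := by push_cast; ring
  -- decompose polyLength q m
  have hkmem : k - 1 ∈ Finset.range m := Finset.mem_range.2 (by omega)
  have hsum : polyLength q m
      = ‖q (k - 1 + 1) - q (k - 1)‖ + ∑ i ∈ (Finset.range m).erase (k - 1), ‖q (i + 1) - q i‖ :=
    (Finset.add_sum_erase _ _ hkmem).symm
  have herase : ∑ i ∈ (Finset.range m).erase (k - 1), ‖q (i + 1) - q i‖
      ≤ ((m - 1 : ℕ) : ℝ) * (L / m) := by
    calc ∑ i ∈ (Finset.range m).erase (k - 1), ‖q (i + 1) - q i‖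
        ≤ ((Finset.range m).erase (k - 1)).card • (L / m) := by
          apply Finset.sum_le_card_nsmul
          intro i hi
          exact hstep i (Finset.mem_range.1 (Finset.mem_of_mem_erase hi))
      _ = ((m - 1 : ℕ) : ℝ) * (L / m) := by
          rw [Finset.card_erase_of_mem hkmem, Finset.card_range, nsmul_eq_mul]
  have hcast : ((m - 1 : ℕ) : ℝ) = (m : ℝ) - 1 := by
    push_cast [Nat.cast_sub hm]; ring
  have hid : ((m : ℝ) - 1) * (L / m) = L - L / m := by
    field_simp
  have hkk : k - 1 + 1 = k := by omega
  rw [hkk] at hsum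
  rw [hcast, hid] at herase
  linarith [hsum, herase]

end
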